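/- arXiv:1103.4075 — 2 statements merged into one kernel-verified Lean document; each statement's English description precedes it below -/
import Mathlib

section
/- (First alternative representation of the N_f = 2 index.) Let q, a, v be complex numbers with 0 < |q| < 1, |q| < |a| < 1, |q||v|² < |a|, v ≠ 0, and suppose that neither v² nor a/v² is an integer power of q. Then (qv², a, a/v²; q)_∞ / (v^{−2}, q/a, qv²/a; q)_∞ · [₂φ₁(qv²/a, q/a; qv²; q, a)]² = (qv²/a, a/v², q, q; q)_∞ / (v^{−2}, qv², a, q/a; q)_∞ · [₂φ₁(a, a; q; q, qv²/a)]². -/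
open scoped BigOperators

/-- The infinite q-Pochhammer symbol `(z;q)_∞ = ∏_{j=0}^∞ (1 - z q^j)`. -/
noncomputable def qPochInf (z q : ℂ) : ℂ := ∏' j : ℕ, (1 - z * q ^ j)

/-- The q-Pochhammer symbol `(z;q)_n = (z;q)_∞ / (z q^n;q)_∞` for `n : ℤ`. -/
noncomputable def qPochInt (z q : ℂ) (n : ℤ) : ℂ :=
  qPochInf z q / qPochInf (z * q ^ n) q

/-- The basic hypergeometric series `₂φ₁(A,B;C;q,Z)`. -/
noncomputable def phi21 (A B C q Z : ℂ) : ℂ :=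
  ∑' n : ℕ, (qPochInt A q n * qPochInt B q n) /
    (qPochInt q q n * qPochInt C q n) * Z ^ n

set_option maxHeartbeats 1000000

namespace QP

open Filter Finset Complex Topology

noncomputable def fp (q z : ℂ) (n : ℕ) : ℂ := ∏ j ∈ Finset.range n, (1 - z * q ^ j)

variable {q : ℂ}

lemma fp_succ (z : ℂ) (n : ℕ) : fp q z (n + 1) = fp q z n * (1 - z * q ^ n) :=
  Finset.prod_range_succ _ _

lemma fp_ne_zero {z : ℂ} (h : ∀ j : ℕ, 1 - z * q ^ j ≠ 0) (n : ℕ) : fp q z n ≠ 0 :=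
  Finset.prod_ne_zero_iff.2 fun j _ => h j

lemma small_ne {z : ℂ} (hq : ‖q‖ < 1) (hz : ‖z‖ < 1) (j : ℕ) : 1 - z * q ^ j ≠ 0 := by
  intro h
  have h1 : z * q ^ j = 1 := by linear_combination -h
  have h2 : ‖z * q ^ j‖ < 1 := by
    rw [norm_mul, norm_pow]
    calc ‖z‖ * ‖q‖ ^ j ≤ ‖z‖ * 1 :=
          mul_le_mul_of_nonneg_left (pow_le_one₀ (norm_nonneg q) hq.le) (norm_nonneg z)
    _ < 1 := by simpa using hz
  rw [h1] at h2
  simp at h2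

lemma summable_log (hq : ‖q‖ < 1) (z : ℂ) :
    Summable (fun j : ℕ => Complex.log (1 - z * q ^ j)) := by
  have h0 : Tendsto (fun j : ℕ => ‖z * q ^ j‖) atTop (𝓝 0) := by
    have := ((tendsto_pow_atTop_nhds_zero_of_norm_lt_one hq).const_mul z).norm
    simpa using this
  have hev : ∀ᶠ j : ℕ in atTop, ‖Complex.log (1 - z * q ^ j)‖ ≤ 3 / 2 * ‖z‖ * ‖q‖ ^ j := by
    filter_upwards [h0.eventually_le_const (by norm_num : (0:ℝ) < 1/2)] with j hj
    have hb := Complex.norm_log_one_add_half_le_self (z := -(z * q ^ j)) (by simpa using hj)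
    rw [show (1 : ℂ) + -(z * q ^ j) = 1 - z * q ^ j by ring] at hb
    calc ‖Complex.log (1 - z * q ^ j)‖ ≤ 3 / 2 * ‖-(z * q ^ j)‖ := hb
    _ = 3 / 2 * ‖z‖ * ‖q‖ ^ j := by rw [norm_neg, norm_mul, norm_pow]; ring
  exact Summable.of_norm_bounded_eventually_nat
    ((summable_geometric_of_lt_one (norm_nonneg q) hq).mul_left _) hev

lemma multipliable_qp (hq : ‖q‖ < 1) (z : ℂ) :
    Multipliable (fun j : ℕ => 1 - z * q ^ j) := by
  by_cases h : ∀ j : ℕ, 1 - z * q ^ j ≠ 0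
  · exact Complex.multipliable_of_summable_log (summable_log hq z)
  · push_neg at h
    obtain ⟨j0, hj0⟩ := h
    refine ⟨0, ?_⟩
    rw [HasProd]
    refine Tendsto.congr' ?_ (tendsto_const_nhds (x := (0:ℂ)))
    filter_upwards [eventually_ge_atTop ({j0} : Finset ℕ)] with s hs
    exact (Finset.prod_eq_zero (hs (Finset.mem_singleton_self j0)) hj0).symm

lemma qp_split (hq : ‖q‖ < 1) (z : ℂ) (n : ℕ) :
    qPochInf z q = fp q z n * qPochInf (z * q ^ n) q := by
  have hm : Multipliable (fun j : ℕ => 1 - z * q ^ (j + n)) := by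
    refine (multipliable_qp hq (z * q ^ n)).congr fun j => ?_
    rw [pow_add]; ring
  have h := Multipliable.prod_mul_tprod_nat_mul' (f := fun j : ℕ => 1 - z * q ^ j) (k := n) hm
  rw [qPochInf, ← h, fp]
  congr 1
  rw [qPochInf]
  exact tprod_congr fun j => by
    show 1 - z * q ^ (j + n) = 1 - z * q ^ n * q ^ j
    rw [pow_add]; ring

lemma qp_ne_zero (hq : ‖q‖ < 1) {z : ℂ} (h : ∀ j : ℕ, 1 - z * q ^ j ≠ 0) :
    qPochInf z q ≠ 0 := by
  have h1 := Complex.cexp_tsum_eq_tprod (f := fun j => 1 - z * q ^ j)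
    (fun j => h j) (summable_log hq z)
  have h2 := h1
  rw [qPochInf, ← h2]
  exact Complex.exp_ne_zero _

lemma shift_ne {z : ℂ} (h : ∀ j : ℕ, 1 - z * q ^ j ≠ 0) (n : ℕ) (j : ℕ) :
    1 - z * q ^ n * q ^ j ≠ 0 := by
  have := h (n + j); rwa [pow_add, ← mul_assoc] at this

lemma qPochInt_eq_fp (hq : ‖q‖ < 1) {z : ℂ} (h : ∀ j : ℕ, 1 - z * q ^ j ≠ 0) (n : ℕ) :
    qPochInt z q (n : ℤ) = fp q z n := by
  rw [qPochInt, zpow_natCast, qp_split hq z n, mul_div_assoc,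
    div_self (qp_ne_zero hq (shift_ne h n)), mul_one]

end QP
namespace QP
open Filter Finset Complex Topology
variable {q : ℂ}
lemma summable_norm_term (hq : ‖q‖ < 1) (α : ℂ) {z : ℂ} (hz : ‖z‖ < 1) :
    Summable (fun n : ℕ => ‖fp q α n / fp q q n * z ^ n‖) := by
  set r : ℝ := (1 + ‖z‖) / 2 with hr
  have hr1 : r < 1 := by rw [hr]; linarith
  have hzr : ‖z‖ < r := by rw [hr]; linarith
  apply summable_of_ratio_norm_eventually_le hr1
  have h0 : Tendsto (fun n : ℕ => (q : ℂ) ^ n) atTop (𝓝 0) :=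
    tendsto_pow_atTop_nhds_zero_of_norm_lt_one hq
  have hL : Tendsto (fun n : ℕ => ‖(1 - α * q ^ n) / (1 - q * q ^ n) * z‖) atTop (𝓝 ‖z‖) := by
    have h1 : Tendsto (fun n : ℕ => 1 - α * q ^ n) atTop (𝓝 1) := by
      simpa using (tendsto_const_nhds (x := (1:ℂ)) (f := atTop)).sub (h0.const_mul α)
    have h2 : Tendsto (fun n : ℕ => 1 - q * q ^ n) atTop (𝓝 1) := by
      simpa using (tendsto_const_nhds (x := (1:ℂ)) (f := atTop)).sub (h0.const_mul q)
    have h3 := ((h1.div h2 one_ne_zero).mul_const z).norm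
    simpa using h3
  filter_upwards [hL.eventually_le_const hzr] with n hn
  have hq1 : fp q q n ≠ 0 := fp_ne_zero (fun j => small_ne hq hq j) n
  have hq2 : (1 : ℂ) - q * q ^ n ≠ 0 := small_ne hq hq n
  have key : fp q α (n + 1) / fp q q (n + 1) * z ^ (n + 1)
      = (fp q α n / fp q q n * z ^ n) * ((1 - α * q ^ n) / (1 - q * q ^ n) * z) := by
    rw [fp_succ, fp_succ, pow_succ]
    field_simp
  rw [Real.norm_of_nonneg (norm_nonneg _), Real.norm_of_nonneg (norm_nonneg _), key, norm_mul]
  calc ‖fp q α n / fp q q n * z ^ n‖ * ‖(1 - α * q ^ n) / (1 - q * q ^ n) * z‖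
      ≤ ‖fp q α n / fp q q n * z ^ n‖ * r :=
        mul_le_mul_of_nonneg_left hn (norm_nonneg _)
    _ = r * ‖fp q α n / fp q q n * z ^ n‖ := by ring

lemma summable_term (hq : ‖q‖ < 1) (α : ℂ) {z : ℂ} (hz : ‖z‖ < 1) :
    Summable (fun n : ℕ => fp q α n / fp q q n * z ^ n) :=
  (summable_norm_term hq α hz).of_norm

lemma crec (hq : ‖q‖ < 1) (α : ℂ) (n : ℕ) :
    fp q α (n + 1) / fp q q (n + 1) * (1 - q * q ^ n)
      = fp q α n / fp q q n * (1 - α * q ^ n) := by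
  have h1 : fp q q n ≠ 0 := fp_ne_zero (fun j => small_ne hq hq j) n
  have h2 : (1 : ℂ) - q * q ^ n ≠ 0 := small_ne hq hq n
  rw [fp_succ, fp_succ]
  field_simp
  exact mul_div_cancel_right₀ _ (by rwa [mul_comm] at h2)

lemma expand (hq : ‖q‖ < 1) (α : ℂ) {w : ℂ} (hw : ‖w‖ < 1) :
    ∑' n : ℕ, fp q α n / fp q q n * w ^ n
      = 1 + ∑' n : ℕ, fp q α (n + 1) / fp q q (n + 1) * w ^ (n + 1) := by
  rw [Summable.tsum_eq_zero_add (summable_term hq α hw)]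
  congr 1
  simp [fp]

lemma claim1 (hq : ‖q‖ < 1) (α : ℂ) {w : ℂ} (hw : ‖w‖ < 1) :
    (1 - w) * ∑' n : ℕ, fp q α n / fp q q n * w ^ n
      = (1 - α * w) * ∑' n : ℕ, fp q α n / fp q q n * (q * w) ^ n := by
  have hqw : ‖q * w‖ < 1 :=
    lt_of_le_of_lt (by rw [norm_mul]; exact mul_le_of_le_one_left (norm_nonneg w) hq.le) hw
  have hs := summable_term hq α hw
  have hsq := summable_term hq α hqw
  have hs1 : Summable fun n : ℕ => fp q α (n + 1) / fp q q (n + 1) * w ^ (n + 1) :=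
    (summable_nat_add_iff 1).2 hs
  have hsq1 : Summable fun n : ℕ => fp q α (n + 1) / fp q q (n + 1) * (q * w) ^ (n + 1) :=
    (summable_nat_add_iff 1).2 hsq
  have hs0 : Summable fun n : ℕ => fp q α n / fp q q n * w ^ (n + 1) :=
    (hs.mul_left w).congr fun n => by ring
  have hsq0 : Summable fun n : ℕ => α * (fp q α n / fp q q n) * q ^ n * w ^ (n + 1) :=
    (hsq.mul_left (α * w)).congr fun n => by rw [mul_pow]; ring
  have e2 : w * ∑' n : ℕ, fp q α n / fp q q n * w ^ n
      = ∑' n : ℕ, fp q α n / fp q q n * w ^ (n + 1) := by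
    rw [← tsum_mul_left]; exact tsum_congr fun n => by ring
  have f2 : α * w * ∑' n : ℕ, fp q α n / fp q q n * (q * w) ^ n
      = ∑' n : ℕ, α * (fp q α n / fp q q n) * q ^ n * w ^ (n + 1) := by
    rw [← tsum_mul_left]; exact tsum_congr fun n => by rw [mul_pow]; ring
  have lhs : (1 - w) * ∑' n : ℕ, fp q α n / fp q q n * w ^ n
      = 1 + ∑' n : ℕ, (fp q α (n + 1) / fp q q (n + 1) * w ^ (n + 1)
          - fp q α n / fp q q n * w ^ (n + 1)) := by
    rw [sub_mul, one_mul, e2, expand hq α hw, Summable.tsum_sub hs1 hs0]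
    ring
  have rhs : (1 - α * w) * ∑' n : ℕ, fp q α n / fp q q n * (q * w) ^ n
      = 1 + ∑' n : ℕ, (fp q α (n + 1) / fp q q (n + 1) * (q * w) ^ (n + 1)
          - α * (fp q α n / fp q q n) * q ^ n * w ^ (n + 1)) := by
    rw [sub_mul, one_mul, f2, expand hq α hqw, Summable.tsum_sub hsq1 hsq0]
    ring
  rw [lhs, rhs]
  congr 1
  refine tsum_congr fun n => ?_
  have h := crec hq α n
  rw [mul_pow]
  linear_combination (w ^ (n + 1)) * h

lemma norm_pow_mul_lt (hq : ‖q‖ < 1) {z : ℂ} (hz : ‖z‖ < 1) (k : ℕ) : ‖q ^ k * z‖ < 1 := by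
  rw [norm_mul, norm_pow]
  calc ‖q‖ ^ k * ‖z‖ ≤ 1 * ‖z‖ :=
        mul_le_mul_of_nonneg_right (pow_le_one₀ (norm_nonneg q) hq.le) (norm_nonneg z)
  _ < 1 := by simpa using hz

lemma qbinom (hq : ‖q‖ < 1) (α : ℂ) {z : ℂ} (hz : ‖z‖ < 1) :
    ∑' n : ℕ, fp q α n / fp q q n * z ^ n = qPochInf (α * z) q / qPochInf z q := by
  have claim2 : ∀ k : ℕ,
      fp q z k * ∑' n : ℕ, fp q α n / fp q q n * z ^ n
        = fp q (α * z) k * ∑' n : ℕ, fp q α n / fp q q n * (q ^ k * z) ^ n := by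
    intro k
    induction k with
    | zero => simp [fp]
    | succ k ih =>
      have hk : ‖q ^ k * z‖ < 1 := norm_pow_mul_lt hq hz k
      have h1 := claim1 hq α hk
      have harg : ∀ n : ℕ, fp q α n / fp q q n * (q ^ (k + 1) * z) ^ n
          = fp q α n / fp q q n * (q * (q ^ k * z)) ^ n := by
        intro n; rw [show q ^ (k + 1) * z = q * (q ^ k * z) by ring]
      calc fp q z (k + 1) * ∑' n : ℕ, fp q α n / fp q q n * z ^ n
          = (1 - z * q ^ k) * (fp q z k * ∑' n : ℕ, fp q α n / fp q q n * z ^ n) := by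
            rw [fp_succ]; ring
        _ = (1 - z * q ^ k)
              * (fp q (α * z) k * ∑' n : ℕ, fp q α n / fp q q n * (q ^ k * z) ^ n) := by
            rw [ih]
        _ = fp q (α * z) k
              * ((1 - q ^ k * z) * ∑' n : ℕ, fp q α n / fp q q n * (q ^ k * z) ^ n) := by
            ring
        _ = fp q (α * z) k
              * ((1 - α * (q ^ k * z))
                  * ∑' n : ℕ, fp q α n / fp q q n * (q * (q ^ k * z)) ^ n) := by
            rw [h1]
        _ = fp q (α * z) (k + 1) * ∑' n : ℕ, fp q α n / fp q q n * (q ^ (k + 1) * z) ^ n := by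
            rw [fp_succ, tsum_congr harg]; ring
  have hT : Summable (fun n : ℕ => ‖fp q α (n + 1) / fp q q (n + 1) * z ^ (n + 1)‖) :=
    (summable_nat_add_iff 1).2 (summable_norm_term hq α hz)
  have hbound : ∀ k : ℕ, ‖(∑' n : ℕ, fp q α n / fp q q n * (q ^ k * z) ^ n) - 1‖
      ≤ ‖q‖ ^ k * ∑' n : ℕ, ‖fp q α (n + 1) / fp q q (n + 1) * z ^ (n + 1)‖ := by
    intro k
    have hk : ‖q ^ k * z‖ < 1 := norm_pow_mul_lt hq hz k
    have hknorm : Summable fun n : ℕ =>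
        ‖fp q α (n + 1) / fp q q (n + 1) * (q ^ k * z) ^ (n + 1)‖ :=
      (summable_nat_add_iff 1).2 (summable_norm_term hq α hk)
    rw [expand hq α hk, add_sub_cancel_left]
    refine le_trans (norm_tsum_le_tsum_norm hknorm) ?_
    rw [← tsum_mul_left]
    refine Summable.tsum_le_tsum ?_ hknorm (hT.mul_left _)
    intro n
    have hqk : (‖q‖ ^ k) ^ (n + 1) ≤ ‖q‖ ^ k := by
      rw [← pow_mul]
      exact pow_le_pow_of_le_one (norm_nonneg q) hq.le (Nat.le_mul_of_pos_right k (Nat.succ_pos n))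
    calc ‖fp q α (n + 1) / fp q q (n + 1) * (q ^ k * z) ^ (n + 1)‖
        = (‖q‖ ^ k) ^ (n + 1) * (‖fp q α (n + 1) / fp q q (n + 1)‖ * ‖z‖ ^ (n + 1)) := by
          rw [norm_mul, mul_pow, norm_mul, norm_pow, norm_pow, norm_pow]; ring
      _ ≤ ‖q‖ ^ k * (‖fp q α (n + 1) / fp q q (n + 1)‖ * ‖z‖ ^ (n + 1)) := by
          have hnn : (0:ℝ) ≤ ‖fp q α (n + 1) / fp q q (n + 1)‖ * ‖z‖ ^ (n + 1) := by positivity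
          exact mul_le_mul_of_nonneg_right hqk hnn
      _ = ‖q‖ ^ k * ‖fp q α (n + 1) / fp q q (n + 1) * z ^ (n + 1)‖ := by
          rw [norm_mul, norm_pow]
  have hlim : Tendsto (fun k : ℕ => ∑' n : ℕ, fp q α n / fp q q n * (q ^ k * z) ^ n)
      atTop (𝓝 1) := by
    have hq1R : ‖(‖q‖ : ℝ)‖ < 1 := by
      rw [Real.norm_eq_abs, _root_.abs_of_nonneg (norm_nonneg q)]; exact hq
    have h0 : Tendsto
        (fun k : ℕ => (∑' n : ℕ, fp q α n / fp q q n * (q ^ k * z) ^ n) - 1) atTop (𝓝 0) := by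
      apply squeeze_zero_norm hbound
      simpa using (tendsto_pow_atTop_nhds_zero_of_norm_lt_one hq1R).mul_const
        (∑' n : ℕ, ‖fp q α (n + 1) / fp q q (n + 1) * z ^ (n + 1)‖)
    have := h0.add_const 1
    simpa using this
  have hfz : Tendsto (fun k : ℕ => fp q z k) atTop (𝓝 (qPochInf z q)) :=
    (multipliable_qp hq z).hasProd.tendsto_prod_nat
  have hfaz : Tendsto (fun k : ℕ => fp q (α * z) k) atTop (𝓝 (qPochInf (α * z) q)) :=
    (multipliable_qp hq (α * z)).hasProd.tendsto_prod_nat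
  have t1 : Tendsto (fun k : ℕ => fp q z k * ∑' n : ℕ, fp q α n / fp q q n * z ^ n) atTop
      (𝓝 (qPochInf z q * ∑' n : ℕ, fp q α n / fp q q n * z ^ n)) := hfz.mul_const _
  have t2 : Tendsto
      (fun k : ℕ => fp q (α * z) k * ∑' n : ℕ, fp q α n / fp q q n * (q ^ k * z) ^ n) atTop
      (𝓝 (qPochInf (α * z) q * 1)) := hfaz.mul hlim
  have hmain := tendsto_nhds_unique (t1.congr claim2) t2
  rw [mul_one] at hmain
  rw [eq_div_iff (qp_ne_zero hq (small_ne hq hz))]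
  rw [← hmain]
  ring
end QP
namespace QP
open Filter Finset Complex Topology
variable {q : ℂ}
lemma heine (hq : ‖q‖ < 1) {A B C Z : ℂ} (hZ : ‖Z‖ < 1) (hB : ‖B‖ < 1)
    (hB0 : B ≠ 0) (hC : ∀ j : ℕ, 1 - C * q ^ j ≠ 0)
    (hAZ : ∀ j : ℕ, 1 - A * Z * q ^ j ≠ 0) :
    ∑' n : ℕ, fp q A n * fp q B n / (fp q q n * fp q C n) * Z ^ n
      = qPochInf B q * qPochInf (A * Z) q / (qPochInf C q * qPochInf Z q)
        * ∑' m : ℕ, fp q (C / B) m * fp q Z m / (fp q q m * fp q (A * Z) m) * B ^ m := by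
  set u : ℕ → ℕ → ℂ := fun n m =>
    (fp q A n / fp q q n * Z ^ n) * (fp q (C / B) m / fp q q m * B ^ m) * q ^ (n * m) with hu
  -- summability of the double series
  have hsum_u : Summable (Function.uncurry u) := by
    refine Summable.of_norm_bounded
      (g := fun p : ℕ × ℕ => ‖fp q A p.1 / fp q q p.1 * Z ^ p.1‖
        * ‖fp q (C / B) p.2 / fp q q p.2 * B ^ p.2‖)
      ((summable_norm_term hq A hZ).mul_of_nonneg (summable_norm_term hq (C / B) hB)
        (fun _ => norm_nonneg _) (fun _ => norm_nonneg _)) ?_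
    rintro ⟨n, m⟩
    show ‖u n m‖ ≤ _
    rw [hu]
    simp only []
    rw [norm_mul, norm_mul (fp q A n / fp q q n * Z ^ n)]
    have h1 : ‖(q : ℂ) ^ (n * m)‖ ≤ 1 := by
      rw [norm_pow]; exact pow_le_one₀ (norm_nonneg q) hq.le
    calc ‖fp q A n / fp q q n * Z ^ n‖ * ‖fp q (C / B) m / fp q q m * B ^ m‖ * ‖(q:ℂ) ^ (n * m)‖
        ≤ ‖fp q A n / fp q q n * Z ^ n‖ * ‖fp q (C / B) m / fp q q m * B ^ m‖ * 1 := by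
          have : (0:ℝ) ≤ ‖fp q A n / fp q q n * Z ^ n‖ * ‖fp q (C / B) m / fp q q m * B ^ m‖ := by
            positivity
          exact mul_le_mul_of_nonneg_left h1 this
      _ = ‖fp q A n / fp q q n * Z ^ n‖ * ‖fp q (C / B) m / fp q q m * B ^ m‖ := by rw [mul_one]
  have hFC : qPochInf C q ≠ 0 := qp_ne_zero hq hC
  -- step 1 : rewrite each term of the LHS
  have key1 : ∀ n : ℕ, fp q A n * fp q B n / (fp q q n * fp q C n) * Z ^ n
      = qPochInf B q / qPochInf C q * ∑' m : ℕ, u n m := by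
    intro n
    have hBq : ‖B * q ^ n‖ < 1 := by
      have := norm_pow_mul_lt hq hB n
      rwa [mul_comm] at this
    have hqb := qbinom hq (C / B) hBq
    rw [show C / B * (B * q ^ n) = C * q ^ n by field_simp] at hqb
    have hFBq : qPochInf (B * q ^ n) q ≠ 0 :=
      qp_ne_zero hq (small_ne hq hBq)
    have hFCq : qPochInf (C * q ^ n) q ≠ 0 := qp_ne_zero hq (shift_ne hC n)
    have eB : fp q B n = qPochInf B q / qPochInf (B * q ^ n) q := by
      rw [qp_split hq B n, mul_div_assoc, div_self hFBq, mul_one]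
    have eC : fp q C n = qPochInf C q / qPochInf (C * q ^ n) q := by
      rw [qp_split hq C n, mul_div_assoc, div_self hFCq, mul_one]
    have e2 : ∑' m : ℕ, u n m
        = (fp q A n / fp q q n * Z ^ n) * (qPochInf (C * q ^ n) q / qPochInf (B * q ^ n) q) := by
      rw [← hqb, ← tsum_mul_left]
      refine tsum_congr fun m => ?_
      rw [hu]
      simp only []
      rw [mul_pow, ← pow_mul]
      ring
    rw [e2, eB, eC]
    have hq1 : fp q q n ≠ 0 := fp_ne_zero (fun j => small_ne hq hq j) n
    field_simp
  -- step 2 : swap the two sums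
  have L2 : ∑' n : ℕ, ∑' m : ℕ, u n m = ∑' m : ℕ, ∑' n : ℕ, u n m := (Summable.tsum_comm hsum_u).symm
  -- step 3 : evaluate the inner sums
  have hFZ : qPochInf Z q ≠ 0 := qp_ne_zero hq (small_ne hq hZ)
  have key2 : ∀ m : ℕ, ∑' n : ℕ, u n m
      = qPochInf (A * Z) q / qPochInf Z q
        * (fp q (C / B) m * fp q Z m / (fp q q m * fp q (A * Z) m) * B ^ m) := by
    intro m
    have hZq : ‖Z * q ^ m‖ < 1 := by
      have := norm_pow_mul_lt hq hZ m
      rwa [mul_comm] at this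
    have hqb := qbinom hq A hZq
    have e2 : ∑' n : ℕ, u n m
        = (fp q (C / B) m / fp q q m * B ^ m)
            * (qPochInf (A * (Z * q ^ m)) q / qPochInf (Z * q ^ m) q) := by
      rw [← hqb, ← tsum_mul_left]
      refine tsum_congr fun n => ?_
      rw [hu]
      simp only []
      rw [mul_pow, ← pow_mul, mul_comm m n]
      ring
    have hfAZ : fp q (A * Z) m ≠ 0 := fp_ne_zero hAZ m
    have hfZ : fp q Z m ≠ 0 := fp_ne_zero (fun j => small_ne hq hZ j) m
    have eAZ : qPochInf (A * (Z * q ^ m)) q = qPochInf (A * Z) q / fp q (A * Z) m := by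
      rw [show A * (Z * q ^ m) = A * Z * q ^ m by ring, eq_div_iff hfAZ]
      conv_rhs => rw [qp_split hq (A * Z) m]
      ring
    have eZ : qPochInf (Z * q ^ m) q = qPochInf Z q / fp q Z m := by
      rw [eq_div_iff hfZ]
      conv_rhs => rw [qp_split hq Z m]
      ring
    rw [e2, eAZ, eZ]
    have hq1 : fp q q m ≠ 0 := fp_ne_zero (fun j => small_ne hq hq j) m
    field_simp
  calc ∑' n : ℕ, fp q A n * fp q B n / (fp q q n * fp q C n) * Z ^ n
      = ∑' n : ℕ, (qPochInf B q / qPochInf C q * ∑' m : ℕ, u n m) := tsum_congr key1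
    _ = qPochInf B q / qPochInf C q * ∑' n : ℕ, ∑' m : ℕ, u n m := tsum_mul_left
    _ = qPochInf B q / qPochInf C q * ∑' m : ℕ, ∑' n : ℕ, u n m := by rw [L2]
    _ = qPochInf B q / qPochInf C q * ∑' m : ℕ, (qPochInf (A * Z) q / qPochInf Z q
          * (fp q (C / B) m * fp q Z m / (fp q q m * fp q (A * Z) m) * B ^ m)) := by
        rw [tsum_congr key2]
    _ = qPochInf B q / qPochInf C q * (qPochInf (A * Z) q / qPochInf Z q
          * ∑' m : ℕ, fp q (C / B) m * fp q Z m / (fp q q m * fp q (A * Z) m) * B ^ m) := by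
        rw [tsum_mul_left]
    _ = qPochInf B q * qPochInf (A * Z) q / (qPochInf C q * qPochInf Z q)
          * ∑' m : ℕ, fp q (C / B) m * fp q Z m / (fp q q m * fp q (A * Z) m) * B ^ m := by
        ring
end QP

theorem first_alternative_representation_Nf2 (q a v : ℂ)
    (hq0 : 0 < ‖q‖) (hq1 : ‖q‖ < 1)
    (hqa : ‖q‖ < ‖a‖) (ha : ‖a‖ < 1)
    (hqv : ‖q‖ * ‖v‖ ^ 2 < ‖a‖)
    (hv : v ≠ 0)
    (hv2 : ∀ m : ℤ, v ^ 2 ≠ q ^ m)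
    (hav2 : ∀ m : ℤ, a / v ^ 2 ≠ q ^ m) :
    (qPochInf (q * v ^ 2) q * qPochInf a q * qPochInf (a / v ^ 2) q) /
      (qPochInf (v ^ (-2 : ℤ)) q * qPochInf (q / a) q * qPochInf (q * v ^ 2 / a) q) *
      phi21 (q * v ^ 2 / a) (q / a) (q * v ^ 2) q a ^ 2
    = (qPochInf (q * v ^ 2 / a) q * qPochInf (a / v ^ 2) q * qPochInf q q * qPochInf q q) /
      (qPochInf (v ^ (-2 : ℤ)) q * qPochInf (q * v ^ 2) q * qPochInf a q * qPochInf (q / a) q) *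
      phi21 a a q q (q * v ^ 2 / a) ^ 2 := by
  open QP in
  -- translate hypotheses into norms
  have hq1' : ‖q‖ < 1 := by exact hq1
  have ha1 : ‖a‖ < 1 := by exact ha
  have hq0' : q ≠ 0 := by
    intro h; rw [h] at hq0; simp at hq0
  have habs_a : (0:ℝ) < ‖a‖ := lt_trans hq0 hqa
  have ha0 : a ≠ 0 := by
    intro h; rw [h] at habs_a; simp at habs_a
  have hqa1 : ‖q / a‖ < 1 := by
    rw [norm_div, div_lt_one habs_a]
    exact hqa
  have hqv2a1 : ‖q * v ^ 2 / a‖ < 1 := by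
    rw [norm_div, div_lt_one habs_a, norm_mul, norm_pow]
    exact hqv
  have hB0 : q * v ^ 2 / a ≠ 0 :=
    div_ne_zero (mul_ne_zero hq0' (pow_ne_zero _ hv)) ha0
  -- nonvanishing families
  have hNa : ∀ j : ℕ, 1 - a * q ^ j ≠ 0 := small_ne hq1' ha1
  have hNqa : ∀ j : ℕ, 1 - q / a * q ^ j ≠ 0 := small_ne hq1' hqa1
  have hNq : ∀ j : ℕ, 1 - q * q ^ j ≠ 0 := small_ne hq1' hq1'
  have hNqv2a : ∀ j : ℕ, 1 - q * v ^ 2 / a * q ^ j ≠ 0 := small_ne hq1' hqv2a1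
  have hNqv2 : ∀ j : ℕ, 1 - q * v ^ 2 * q ^ j ≠ 0 := by
    intro j h
    apply hv2 (-((j : ℤ) + 1))
    have h1 : v ^ 2 * q ^ (j + 1) = 1 := by
      rw [pow_succ]; linear_combination -h
    rw [show -((j : ℤ) + 1) = -(((j + 1 : ℕ) : ℤ)) by push_cast; ring, zpow_neg, zpow_natCast]
    exact eq_inv_of_mul_eq_one_left h1
  have hNav2 : ∀ j : ℕ, 1 - a / v ^ 2 * q ^ j ≠ 0 := by
    intro j h
    apply hav2 (-(j : ℤ))
    have h1 : a / v ^ 2 * q ^ j = 1 := by linear_combination -h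
    rw [zpow_neg, zpow_natCast]
    exact eq_inv_of_mul_eq_one_left h1
  have hNv2i : ∀ j : ℕ, 1 - v ^ (-2 : ℤ) * q ^ j ≠ 0 := by
    intro j h
    apply hv2 (j : ℤ)
    have h1 : (v ^ 2 : ℂ)⁻¹ * q ^ j = 1 := by
      rw [show ((v ^ 2 : ℂ))⁻¹ = v ^ (-2 : ℤ) by
        rw [zpow_neg, show ((2:ℤ)) = ((2:ℕ) : ℤ) by norm_cast, zpow_natCast]]
      linear_combination -h
    have h2 : (v ^ 2 : ℂ)⁻¹ = ((q ^ j : ℂ))⁻¹ := eq_inv_of_mul_eq_one_left h1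
    rw [zpow_natCast]
    rw [← inv_inv (v ^ 2 : ℂ), h2, inv_inv]
  -- nonvanishing of the infinite products
  have Fa : qPochInf a q ≠ 0 := qp_ne_zero hq1' hNa
  have Fqa : qPochInf (q / a) q ≠ 0 := qp_ne_zero hq1' hNqa
  have Fq : qPochInf q q ≠ 0 := qp_ne_zero hq1' hNq
  have Fqv2a : qPochInf (q * v ^ 2 / a) q ≠ 0 := qp_ne_zero hq1' hNqv2a
  have Fqv2 : qPochInf (q * v ^ 2) q ≠ 0 := qp_ne_zero hq1' hNqv2
  have Fav2 : qPochInf (a / v ^ 2) q ≠ 0 := qp_ne_zero hq1' hNav2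
  have Fv2i : qPochInf (v ^ (-2 : ℤ)) q ≠ 0 := qp_ne_zero hq1' hNv2i
  -- convert the two phi21's into fp-form series
  have hphi1 : phi21 (q * v ^ 2 / a) (q / a) (q * v ^ 2) q a
      = ∑' n : ℕ, fp q (q / a) n * fp q (q * v ^ 2 / a) n
          / (fp q q n * fp q (q * v ^ 2) n) * a ^ n := by
    rw [phi21]
    refine tsum_congr fun n => ?_
    rw [qPochInt_eq_fp hq1' hNqv2a n, qPochInt_eq_fp hq1' hNqa n,
      qPochInt_eq_fp hq1' hNq n, qPochInt_eq_fp hq1' hNqv2 n]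
    ring
  have hphi2 : phi21 a a q q (q * v ^ 2 / a)
      = ∑' m : ℕ, fp q a m * fp q a m / (fp q q m * fp q q m) * (q * v ^ 2 / a) ^ m := by
    rw [phi21]
    refine tsum_congr fun m => ?_
    rw [qPochInt_eq_fp hq1' hNa m, qPochInt_eq_fp hq1' hNq m]
  -- apply Heine's transformation with A = q/a, B = q*v^2/a, C = q*v^2, Z = a
  have hAZeq : q / a * a = q := div_mul_cancel₀ q ha0
  have hAZ : ∀ j : ℕ, 1 - (q / a) * a * q ^ j ≠ 0 := by
    intro j; rw [hAZeq]; exact hNq j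
  have hH := heine (q := q) hq1' (A := q / a) (B := q * v ^ 2 / a) (C := q * v ^ 2)
    (Z := a) ha1 hqv2a1 hB0 hNqv2 hAZ
  have hCB : q * v ^ 2 / (q * v ^ 2 / a) = a := by
    field_simp
  rw [hCB, hAZeq] at hH
  -- put everything together
  rw [hphi1, hH, ← hphi2]
  have keyalg : ∀ x1 x2 x3 x4 x5 x6 x7 : ℂ, x2 ≠ 0 → x3 ≠ 0 → x4 ≠ 0 → x5 ≠ 0 → x7 ≠ 0 →
      x5 * x2 * x6 / (x7 * x3 * x4) * (x4 * x1 / (x5 * x2)) ^ 2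
        = x4 * x6 * x1 * x1 / (x7 * x5 * x2 * x3) := by
    intro x1 x2 x3 x4 x5 x6 x7 h2 h3 h4 h5 h7
    field_simp
  have hKey := keyalg (qPochInf q q) (qPochInf a q) (qPochInf (q / a) q)
    (qPochInf (q * v ^ 2 / a) q) (qPochInf (q * v ^ 2) q) (qPochInf (a / v ^ 2) q)
    (qPochInf (v ^ (-2 : ℤ)) q) Fa Fqa Fqv2a Fqv2 Fv2i
  linear_combination (phi21 a a q q (q * v ^ 2 / a)) ^ 2 * hKey
end

section
/- (Residue evaluation of the N_f = 1 index integral.) Let p, b be complex numbers with 0 < |p| < 1 and |p| < |b| < 1, and let k be a non-negative integer. Then (1/2π) ∫_0^{2π} [(b p^{1+k} e^{iθ}; p²)_∞ (b p^{1+k} e^{−iθ}; p²)_∞ / ((p^{1+k} e^{iθ}/b; p²)_∞ (p^{1+k} e^{−iθ}/b; p²)_∞)] dθ = (p^{2+2k}, b²; p²)_∞ / (p², p^{2+2k}/b²; p²)_∞ · ₂φ₁(p^{2+2k}/b², p²/b²; p^{2+2k}; p², b²). (With q = p², a = b², this evaluates the contour integral occurring in the superconformal index I_{e,N_f=1;h}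 as a sum over residues of the poles inside the unit circle.) -/
open scoped BigOperators Real

open Complex Filter Finset Topology MeasureTheory

set_option maxHeartbeats 1000000

noncomputable def fpoch (z q : ℂ) (n : ℕ) : ℂ := ∏ j ∈ Finset.range n, (1 - z * q ^ j)

lemma factor_ne_zero {z q : ℂ} (hq : ‖q‖ < 1) (hz : ‖z‖ < 1) (j : ℕ) :
    1 - z * q ^ j ≠ 0 := by
  intro h
  have h1 : (1 : ℂ) = z * q ^ j := by linear_combination h
  have : (1 : ℝ) ≤ ‖z * q ^ j‖ := by rw [← h1]; simp
  have hle : ‖z * q ^ j‖ < 1 := by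
    rw [norm_mul, norm_pow]
    calc ‖z‖ * ‖q‖ ^ j ≤ ‖z‖ * 1 := by
          refine mul_le_mul_of_nonneg_left (pow_le_one₀ (norm_nonneg q) hq.le) (norm_nonneg z)
      _ < 1 := by simpa using hz
  linarith

lemma summable_log {z q : ℂ} (hq : ‖q‖ < 1) :
    Summable (fun j : ℕ => Complex.log (1 - z * q ^ j)) := by
  have hgeo : Summable (fun j : ℕ => (3/2 : ℝ) * (‖z‖ * ‖q‖ ^ j)) :=
    ((summable_geometric_of_lt_one (norm_nonneg q) hq).mul_left _).mul_left _
  refine hgeo.of_norm_bounded_eventually ?_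
  have htend : Tendsto (fun j : ℕ => ‖z‖ * ‖q‖ ^ j) atTop (𝓝 0) := by
    simpa using (tendsto_pow_atTop_nhds_zero_of_norm_lt_one (x := (‖q‖ : ℝ))
      (by simpa using hq)).const_mul ‖z‖
  have hev : ∀ᶠ j in atTop, ‖z‖ * ‖q‖ ^ j ≤ 1/2 :=
    htend.eventually_le_const (by norm_num)
  rw [Nat.cofinite_eq_atTop]
  filter_upwards [hev] with j hj
  have hb : ‖(-(z * q ^ j))‖ ≤ 1/2 := by
    rw [norm_neg, norm_mul, norm_pow]; exact hj
  have := Complex.norm_log_one_add_half_le_self hb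
  calc ‖Complex.log (1 - z * q ^ j)‖ = ‖Complex.log (1 + -(z * q ^ j))‖ := by
        rw [sub_eq_add_neg]
    _ ≤ 3/2 * ‖(-(z * q ^ j))‖ := this
    _ ≤ 3/2 * (‖z‖ * ‖q‖ ^ j) := by rw [norm_neg, norm_mul, norm_pow]

lemma hasProd_qPochInf {z q : ℂ} (hq : ‖q‖ < 1) (hz : ‖z‖ < 1) :
    HasProd (fun j : ℕ => 1 - z * q ^ j) (qPochInf z q) := by
  have hsum := (summable_log (z := z) (q := q) hq).hasSum
  have hp := hsum.cexp
  have heq : (fun j : ℕ => Complex.exp (Complex.log (1 - z * q ^ j)))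
      = fun j : ℕ => 1 - z * q ^ j := by
    funext j; exact Complex.exp_log (factor_ne_zero hq hz j)
  rw [Function.comp_def, heq] at hp
  rw [qPochInf, hp.tprod_eq]
  exact hp

lemma qPochInf_ne_zero {z q : ℂ} (hq : ‖q‖ < 1) (hz : ‖z‖ < 1) :
    qPochInf z q ≠ 0 := by
  have hsum := (summable_log (z := z) (q := q) hq).hasSum
  have hp := hsum.cexp
  have heq : (fun j : ℕ => Complex.exp (Complex.log (1 - z * q ^ j)))
      = fun j : ℕ => 1 - z * q ^ j := by
    funext j; exact Complex.exp_log (factor_ne_zero hq hz j)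
  rw [Function.comp_def, heq] at hp
  rw [qPochInf, hp.tprod_eq]
  exact Complex.exp_ne_zero _


lemma norm_mul_q_lt {z q : ℂ} (hq : ‖q‖ < 1) (hz : ‖z‖ < 1) (n : ℕ) :
    ‖z * q ^ n‖ < 1 := by
  rw [norm_mul, norm_pow]
  calc ‖z‖ * ‖q‖ ^ n ≤ ‖z‖ * 1 :=
        mul_le_mul_of_nonneg_left (pow_le_one₀ (norm_nonneg q) hq.le) (norm_nonneg z)
    _ < 1 := by simpa using hz

lemma qPochInf_peel {z q : ℂ} (hq : ‖q‖ < 1) (hz : ‖z‖ < 1) :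
    qPochInf z q = (1 - z) * qPochInf (z * q) q := by
  have hzq : ‖z * q‖ < 1 := by
    have := norm_mul_q_lt hq hz 1
    simpa [pow_one] using this
  have hm1 : Multipliable (fun n : ℕ => 1 - z * q ^ (n + 1)) :=
    (hasProd_qPochInf (z := z * q) hq hzq).multipliable.congr (fun b => by ring_nf)
  have h0 := tprod_eq_zero_mul' (f := fun n : ℕ => 1 - z * q ^ n) hm1
  have h1 : ∏' (b : ℕ), (1 - z * q ^ (b + 1)) = qPochInf (z * q) q := by
    rw [qPochInf]
    exact tprod_congr fun b => by ring_nf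
  rw [show qPochInf z q = ∏' j : ℕ, (1 - z * q ^ j) from rfl, h0, h1]
  norm_num

lemma qPochInf_fpoch {z q : ℂ} (hq : ‖q‖ < 1) (hz : ‖z‖ < 1) (n : ℕ) :
    qPochInf z q = fpoch z q n * qPochInf (z * q ^ n) q := by
  induction n with
  | zero => simp [fpoch]
  | succ n ih =>
    rw [ih, qPochInf_peel hq (norm_mul_q_lt hq hz n)]
    have h2 : fpoch z q (n+1) = fpoch z q n * (1 - z * q ^ n) := by
      rw [fpoch, fpoch, Finset.prod_range_succ]
    have h3 : z * q ^ n * q = z * q ^ (n+1) := by ring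
    rw [h2, h3]
    ring

lemma fpoch_ne_zero {z q : ℂ} (hq : ‖q‖ < 1) (hz : ‖z‖ < 1) (n : ℕ) :
    fpoch z q n ≠ 0 := by
  rw [fpoch]
  apply Finset.prod_ne_zero_iff.2
  intro j _
  intro h
  have h1 : (1:ℝ) ≤ ‖z * q ^ j‖ := by
    have : (1 : ℂ) = z * q ^ j := by linear_combination h
    rw [← this]; simp
  exact absurd (norm_mul_q_lt hq hz j) (not_lt.2 h1)

lemma qPochInt_eq_fpoch {z q : ℂ} (hq : ‖q‖ < 1) (hz : ‖z‖ < 1) (n : ℕ) :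
    qPochInt z q n = fpoch z q n := by
  rw [qPochInt, zpow_natCast, qPochInf_fpoch hq hz n,
    mul_div_assoc, div_self (qPochInf_ne_zero hq (norm_mul_q_lt hq hz n)), mul_one]

lemma summable_of_ratio {f : ℕ → ℂ} {r : ℕ → ℂ} {L : ℝ}
    (hf : ∀ n, f (n + 1) = r n * f n)
    (hr : Tendsto (fun n => r n) atTop (𝓝 0) → True)
    (hrt : Tendsto (fun n => ‖r n‖) atTop (𝓝 L)) (hL : L < 1) : Summable f := by
  obtain ⟨c, hcL, hc1⟩ := exists_between hL
  have hev : ∀ᶠ n in atTop, ‖r n‖ ≤ c := hrt.eventually_le_const hcL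
  refine summable_of_ratio_norm_eventually_le hc1 ?_
  filter_upwards [hev] with n hn
  rw [hf n, norm_mul]
  exact mul_le_mul_of_nonneg_right hn (norm_nonneg _)

lemma summable_term {q : ℂ} (hq : ‖q‖ < 1) (A B : ℂ) {C Z : ℂ} (hC : ‖C‖ < 1)
    (hZ : ‖Z‖ < 1) :
    Summable (fun n : ℕ => fpoch A q n * fpoch B q n / (fpoch q q n * fpoch C q n) * Z ^ n) := by
  have hqq : ∀ n : ℕ, (1 : ℂ) - q * q ^ n ≠ 0 := by
    intro n h
    have h1 : (1:ℝ) ≤ ‖q * q ^ n‖ := by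
      have : (1 : ℂ) = q * q ^ n := by linear_combination h
      rw [← this]; simp
    exact absurd (norm_mul_q_lt hq hq n) (not_lt.2 h1)
  have hCC : ∀ n : ℕ, (1 : ℂ) - C * q ^ n ≠ 0 := by
    intro n h
    have h1 : (1:ℝ) ≤ ‖C * q ^ n‖ := by
      have : (1 : ℂ) = C * q ^ n := by linear_combination h
      rw [← this]; simp
    exact absurd (norm_mul_q_lt hq hC n) (not_lt.2 h1)
  set r : ℕ → ℂ := fun n =>
    (1 - A * q ^ n) * (1 - B * q ^ n) / ((1 - q * q ^ n) * (1 - C * q ^ n)) * Z with hr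
  have hrec : ∀ n : ℕ, fpoch A q (n+1) * fpoch B q (n+1) / (fpoch q q (n+1) * fpoch C q (n+1)) * Z ^ (n+1)
      = r n * (fpoch A q n * fpoch B q n / (fpoch q q n * fpoch C q n) * Z ^ n) := by
    intro n
    simp only [fpoch, Finset.prod_range_succ, hr]
    field_simp
    ring
  have hq0 : Tendsto (fun n : ℕ => q ^ n) atTop (𝓝 0) :=
    tendsto_pow_atTop_nhds_zero_of_norm_lt_one hq
  have hrt : Tendsto (fun n => ‖r n‖) atTop (𝓝 ‖Z‖) := by
    have h1 : Tendsto r atTop (𝓝 Z) := by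
      have : Tendsto (fun n : ℕ =>
          (1 - A * q ^ n) * (1 - B * q ^ n) / ((1 - q * q ^ n) * (1 - C * q ^ n)) * Z)
          atTop (𝓝 ((1 - A * 0) * (1 - B * 0) / ((1 - q * 0) * (1 - C * 0)) * Z)) := by
        apply Tendsto.mul _ tendsto_const_nhds
        apply Tendsto.div
        · exact (((tendsto_const_nhds.sub (hq0.const_mul A))).mul
            ((tendsto_const_nhds.sub (hq0.const_mul B))))
        · exact (((tendsto_const_nhds.sub (hq0.const_mul q))).mul
            ((tendsto_const_nhds.sub (hq0.const_mul C))))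
        · norm_num
      simpa using this
    exact (continuous_norm.tendsto Z).comp h1
  exact summable_of_ratio (f := fun n => fpoch A q n * fpoch B q n / (fpoch q q n * fpoch C q n) * Z ^ n)
    hrec (fun _ => trivial) hrt hZ


lemma fpoch_zero (q : ℂ) (n : ℕ) : fpoch 0 q n = 1 := by simp [fpoch]

lemma fpoch_succ (z q : ℂ) (n : ℕ) : fpoch z q (n+1) = fpoch z q n * (1 - z * q ^ n) := by
  rw [fpoch, fpoch, Finset.prod_range_succ]

/-- coefficients of the q-binomial series -/
noncomputable def qbc (A q : ℂ) (n : ℕ) : ℂ := fpoch A q n / fpoch q q n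

lemma summable_qb {q : ℂ} (hq : ‖q‖ < 1) (A : ℂ) {Z : ℂ} (hZ : ‖Z‖ < 1) :
    Summable (fun n : ℕ => qbc A q n * Z ^ n) := by
  have := summable_term hq A 0 (C := 0) (by norm_num) hZ
  refine this.congr fun n => ?_
  simp [qbc, fpoch_zero]

lemma qbc_rec {q : ℂ} (hq : ‖q‖ < 1) (A : ℂ) (n : ℕ) :
    qbc A q (n+1) * (1 - q * q ^ n) = qbc A q n * (1 - A * q ^ n) := by
  have h1 : fpoch q q n ≠ 0 := fpoch_ne_zero hq hq n
  have h2 : (1 : ℂ) - q * q ^ n ≠ 0 := by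
    intro h
    have : (1 : ℂ) = q * q ^ n := by linear_combination h
    have : (1:ℝ) ≤ ‖q * q ^ n‖ := by rw [← this]; simp
    exact absurd (norm_mul_q_lt hq hq n) (not_lt.2 this)
  rw [qbc, qbc, fpoch_succ, fpoch_succ]
  rw [div_mul_eq_mul_div, mul_div_mul_right _ _ h2]
  ring

lemma qb_FE {q : ℂ} (hq : ‖q‖ < 1) (A : ℂ) {W : ℂ} (hW : ‖W‖ < 1) :
    (1 - W) * ∑' n : ℕ, qbc A q n * W ^ n
      = (1 - A * W) * ∑' n : ℕ, qbc A q n * (q * W) ^ n := by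
  have hqW : ‖q * W‖ < 1 := by
    rw [norm_mul]
    calc ‖q‖ * ‖W‖ ≤ 1 * ‖W‖ := mul_le_mul_of_nonneg_right hq.le (norm_nonneg W)
      _ < 1 := by simpa using hW
  have s1 : Summable (fun n : ℕ => qbc A q n * W ^ n) := summable_qb hq A hW
  have s2 : Summable (fun n : ℕ => qbc A q n * (q * W) ^ n) := summable_qb hq A hqW
  have s1' : Summable (fun n : ℕ => qbc A q (n+1) * W ^ (n+1)) :=
    (summable_nat_add_iff (f := fun n : ℕ => qbc A q n * W ^ n) 1).2 s1
  have s2' : Summable (fun n : ℕ => qbc A q (n+1) * (q * W) ^ (n+1)) :=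
    (summable_nat_add_iff (f := fun n : ℕ => qbc A q n * (q * W) ^ n) 1).2 s2
  have s1'' : Summable (fun n : ℕ => qbc A q n * W ^ (n+1)) :=
    (s1.mul_left W).congr fun n => by ring
  have s2'' : Summable (fun n : ℕ => qbc A q n * (A * W) * (q * W) ^ n) :=
    (s2.mul_left (A * W)).congr fun n => by ring
  have e1 : ∑' n : ℕ, qbc A q n * W ^ n
      = qbc A q 0 * W ^ 0 + ∑' n : ℕ, qbc A q (n+1) * W ^ (n+1) :=
    Summable.tsum_eq_zero_add s1
  have e2 : ∑' n : ℕ, qbc A q n * (q * W) ^ n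
      = qbc A q 0 * (q * W) ^ 0 + ∑' n : ℕ, qbc A q (n+1) * (q * W) ^ (n+1) :=
    Summable.tsum_eq_zero_add s2
  have e3 : W * ∑' n : ℕ, qbc A q n * W ^ n = ∑' n : ℕ, qbc A q n * W ^ (n+1) := by
    rw [← tsum_mul_left]
    exact tsum_congr fun n => by ring
  have e4 : (A * W) * ∑' n : ℕ, qbc A q n * (q * W) ^ n
      = ∑' n : ℕ, qbc A q n * (A * W) * (q * W) ^ n := by
    rw [← tsum_mul_left]
    exact tsum_congr fun n => by ring
  have lhs : (1 - W) * ∑' n : ℕ, qbc A q n * W ^ n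
      = qbc A q 0 + ∑' n : ℕ, (qbc A q (n+1) * W ^ (n+1) - qbc A q n * W ^ (n+1)) := by
    rw [sub_mul, one_mul, e3]
    nth_rewrite 1 [e1]
    rw [Summable.tsum_sub s1' s1'']
    simp only [pow_zero, mul_one]
    ring
  have rhs : (1 - A * W) * ∑' n : ℕ, qbc A q n * (q * W) ^ n
      = qbc A q 0 + ∑' n : ℕ,
        (qbc A q (n+1) * (q * W) ^ (n+1) - qbc A q n * (A * W) * (q * W) ^ n) := by
    rw [sub_mul, one_mul, e4]
    nth_rewrite 1 [e2]
    rw [Summable.tsum_sub s2' s2'']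
    simp only [pow_zero, mul_one]
    ring
  rw [lhs, rhs]
  congr 1
  refine tsum_congr fun n => ?_
  linear_combination (W : ℂ) ^ (n+1) * qbc_rec hq A n

lemma qbc_zero (A q : ℂ) : qbc A q 0 = 1 := by simp [qbc, fpoch]

lemma qb_telescope {q : ℂ} (hq : ‖q‖ < 1) (A : ℂ) {Z : ℂ} (hZ : ‖Z‖ < 1) (n : ℕ) :
    fpoch Z q n * ∑' m : ℕ, qbc A q m * Z ^ m
      = fpoch (A * Z) q n * ∑' m : ℕ, qbc A q m * (q ^ n * Z) ^ m := by
  induction n with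
  | zero =>
    simp only [fpoch, Finset.range_zero, Finset.prod_empty, one_mul, pow_zero]
  | succ n ih =>
    have hW : ‖q ^ n * Z‖ < 1 := by
      rw [norm_mul, norm_pow]
      calc ‖q‖ ^ n * ‖Z‖ ≤ 1 * ‖Z‖ :=
            mul_le_mul_of_nonneg_right (pow_le_one₀ (norm_nonneg q) hq.le) (norm_nonneg Z)
        _ < 1 := by simpa using hZ
    have hFE := qb_FE hq A hW
    have harg : q * (q ^ n * Z) = q ^ (n+1) * Z := by ring
    rw [harg] at hFE
    calc fpoch Z q (n+1) * ∑' m : ℕ, qbc A q m * Z ^ m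
        = (1 - Z * q ^ n) * (fpoch Z q n * ∑' m : ℕ, qbc A q m * Z ^ m) := by
          rw [fpoch_succ]; ring
      _ = (1 - Z * q ^ n) * (fpoch (A * Z) q n * ∑' m : ℕ, qbc A q m * (q ^ n * Z) ^ m) := by
          rw [ih]
      _ = fpoch (A * Z) q n * ((1 - q ^ n * Z) * ∑' m : ℕ, qbc A q m * (q ^ n * Z) ^ m) := by
          ring
      _ = fpoch (A * Z) q n * ((1 - A * (q ^ n * Z)) * ∑' m : ℕ, qbc A q m * (q ^ (n+1) * Z) ^ m) := by
          rw [hFE]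
      _ = fpoch (A * Z) q (n+1) * ∑' m : ℕ, qbc A q m * (q ^ (n+1) * Z) ^ m := by
          rw [fpoch_succ]; ring

lemma qb_tendsto_one {q : ℂ} (hq : ‖q‖ < 1) (A : ℂ) {Z : ℂ} (hZ : ‖Z‖ < 1) :
    Tendsto (fun n : ℕ => ∑' m : ℕ, qbc A q m * (q ^ n * Z) ^ m) atTop (𝓝 1) := by
  have hKs : Summable (fun m : ℕ => ‖qbc A q (m+1) * Z ^ (m+1)‖) :=
    summable_norm_iff.mpr
      ((summable_nat_add_iff (f := fun n : ℕ => qbc A q n * Z ^ n) 1).2 (summable_qb hq A hZ))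
  set K := ∑' m : ℕ, ‖qbc A q (m+1) * Z ^ (m+1)‖ with hK
  have hWn : ∀ n : ℕ, ‖q ^ n * Z‖ < 1 := by
    intro n
    rw [norm_mul, norm_pow]
    calc ‖q‖ ^ n * ‖Z‖ ≤ 1 * ‖Z‖ :=
          mul_le_mul_of_nonneg_right (pow_le_one₀ (norm_nonneg q) hq.le) (norm_nonneg Z)
      _ < 1 := by simpa using hZ
  have hbound : ∀ n : ℕ, ‖(∑' m : ℕ, qbc A q m * (q ^ n * Z) ^ m) - 1‖ ≤ ‖q‖ ^ n * K := by
    intro n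
    have hsn : Summable (fun m : ℕ => qbc A q m * (q ^ n * Z) ^ m) := summable_qb hq A (hWn n)
    have hsn' : Summable (fun m : ℕ => qbc A q (m+1) * (q ^ n * Z) ^ (m+1)) :=
      (summable_nat_add_iff (f := fun m : ℕ => qbc A q m * (q ^ n * Z) ^ m) 1).2 hsn
    have e0 : (∑' m : ℕ, qbc A q m * (q ^ n * Z) ^ m) - 1
        = ∑' m : ℕ, qbc A q (m+1) * (q ^ n * Z) ^ (m+1) := by
      rw [Summable.tsum_eq_zero_add hsn, qbc_zero]
      simp
    rw [e0]
    have hterm : ∀ m : ℕ, ‖qbc A q (m+1) * (q ^ n * Z) ^ (m+1)‖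
        ≤ ‖q‖ ^ n * ‖qbc A q (m+1) * Z ^ (m+1)‖ := by
      intro m
      rw [norm_mul, norm_mul, mul_pow, norm_mul, norm_pow, norm_pow, norm_pow]
      have h1 : (‖q‖ ^ n) ^ (m+1) ≤ ‖q‖ ^ n :=
        pow_le_of_le_one (pow_nonneg (norm_nonneg q) n) (pow_le_one₀ (norm_nonneg q) hq.le)
          (Nat.succ_ne_zero m)
      calc ‖qbc A q (m+1)‖ * ((‖q‖ ^ n) ^ (m+1) * ‖Z‖ ^ (m+1))
          ≤ ‖qbc A q (m+1)‖ * (‖q‖ ^ n * ‖Z‖ ^ (m+1)) := by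
            refine mul_le_mul_of_nonneg_left
              (mul_le_mul_of_nonneg_right h1 (pow_nonneg (norm_nonneg Z) _))
              (norm_nonneg _)
        _ = ‖q‖ ^ n * (‖qbc A q (m+1)‖ * ‖Z‖ ^ (m+1)) := by ring
    calc ‖∑' m : ℕ, qbc A q (m+1) * (q ^ n * Z) ^ (m+1)‖
        ≤ ∑' m : ℕ, ‖qbc A q (m+1) * (q ^ n * Z) ^ (m+1)‖ :=
          norm_tsum_le_tsum_norm (summable_norm_iff.mpr hsn')
      _ ≤ ∑' m : ℕ, ‖q‖ ^ n * ‖qbc A q (m+1) * Z ^ (m+1)‖ :=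
          Summable.tsum_le_tsum hterm (summable_norm_iff.mpr hsn') (hKs.mul_left _)
      _ = ‖q‖ ^ n * K := tsum_mul_left
  have hgeo : Tendsto (fun n : ℕ => ‖q‖ ^ n * K) atTop (𝓝 0) := by
    simpa using (tendsto_pow_atTop_nhds_zero_of_norm_lt_one
      (x := (‖q‖ : ℝ)) (by simpa using hq)).mul_const K
  have h0 : Tendsto (fun n : ℕ => (∑' m : ℕ, qbc A q m * (q ^ n * Z) ^ m) - 1) atTop (𝓝 0) := by
    rw [tendsto_zero_iff_norm_tendsto_zero]
    exact squeeze_zero (fun n => norm_nonneg _) hbound hgeo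
  have := h0.add_const 1
  simpa using this

lemma qbinom {q : ℂ} (hq : ‖q‖ < 1) (A : ℂ) {Z : ℂ} (hZ : ‖Z‖ < 1) (hAZ : ‖A * Z‖ < 1) :
    ∑' n : ℕ, qbc A q n * Z ^ n = qPochInf (A * Z) q / qPochInf Z q := by
  have l1 : Tendsto (fun n : ℕ => fpoch Z q n) atTop (𝓝 (qPochInf Z q)) :=
    (hasProd_qPochInf hq hZ).tendsto_prod_nat
  have l2 : Tendsto (fun n : ℕ => fpoch (A * Z) q n) atTop (𝓝 (qPochInf (A * Z) q)) :=
    (hasProd_qPochInf hq hAZ).tendsto_prod_nat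
  have l3 := qb_tendsto_one hq A hZ
  have t1 : Tendsto (fun n : ℕ => fpoch Z q n * ∑' m : ℕ, qbc A q m * Z ^ m)
      atTop (𝓝 (qPochInf Z q * ∑' m : ℕ, qbc A q m * Z ^ m)) :=
    l1.mul_const _
  have t2 : Tendsto (fun n : ℕ => fpoch (A * Z) q n * ∑' m : ℕ, qbc A q m * (q ^ n * Z) ^ m)
      atTop (𝓝 (qPochInf (A * Z) q * 1)) := l2.mul l3
  have t1' : Tendsto (fun n : ℕ => fpoch (A * Z) q n * ∑' m : ℕ, qbc A q m * (q ^ n * Z) ^ m)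
      atTop (𝓝 (qPochInf Z q * ∑' m : ℕ, qbc A q m * Z ^ m)) :=
    t1.congr (fun n => qb_telescope hq A hZ n)
  have huniq := tendsto_nhds_unique t1' t2
  rw [mul_one] at huniq
  rw [eq_div_iff (qPochInf_ne_zero hq hZ)]
  rw [mul_comm]
  exact huniq


lemma qPochInf_shift {z q : ℂ} (hq : ‖q‖ < 1) (hz : ‖z‖ < 1) (n : ℕ) :
    qPochInf (z * q ^ n) q = qPochInf z q / fpoch z q n := by
  rw [eq_div_iff (fpoch_ne_zero hq hz n), mul_comm, ← qPochInf_fpoch hq hz n]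

lemma heine {q A B C Z : ℂ} (hq : ‖q‖ < 1) (hB : ‖B‖ < 1) (hB0 : B ≠ 0)
    (hC : ‖C‖ < 1) (hZ : ‖Z‖ < 1) (hAZ : ‖A * Z‖ < 1) (hCB : ‖C / B‖ < 1) :
    ∑' n : ℕ, fpoch A q n * fpoch B q n / (fpoch q q n * fpoch C q n) * Z ^ n
      = (qPochInf B q * qPochInf (A * Z) q) / (qPochInf C q * qPochInf Z q)
        * ∑' m : ℕ, fpoch (C / B) q m * fpoch Z q m / (fpoch q q m * fpoch (A * Z) q m) * B ^ m := by
  set g : ℕ → ℕ → ℂ :=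
    fun n m => (qbc A q n * Z ^ n) * (qbc (C / B) q m * (B * q ^ n) ^ m) with hg
  have hBqn : ∀ n : ℕ, ‖B * q ^ n‖ < 1 := fun n => norm_mul_q_lt hq hB n
  have hZqm : ∀ m : ℕ, ‖Z * q ^ m‖ < 1 := fun m => norm_mul_q_lt hq hZ m
  -- step A : inner sums over m
  have stepA : ∀ n : ℕ, ∑' m : ℕ, g n m
      = (qPochInf C q / qPochInf B q)
        * (fpoch A q n * fpoch B q n / (fpoch q q n * fpoch C q n) * Z ^ n) := by
    intro n
    have harg : C / B * (B * q ^ n) = C * q ^ n := by field_simp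
    have hAZ' : ‖C / B * (B * q ^ n)‖ < 1 := by rw [harg]; exact norm_mul_q_lt hq hC n
    have hbin := qbinom hq (C / B) (hBqn n) hAZ'
    rw [harg] at hbin
    calc ∑' m : ℕ, g n m
        = (qbc A q n * Z ^ n) * ∑' m : ℕ, qbc (C / B) q m * (B * q ^ n) ^ m := by
          rw [hg, tsum_mul_left]
      _ = (qbc A q n * Z ^ n) * (qPochInf (C * q ^ n) q / qPochInf (B * q ^ n) q) := by
          rw [hbin]
      _ = (qbc A q n * Z ^ n)
          * ((qPochInf C q / fpoch C q n) / (qPochInf B q / fpoch B q n)) := by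
          rw [qPochInf_shift hq hC n, qPochInf_shift hq hB n]
      _ = (qPochInf C q / qPochInf B q)
          * (fpoch A q n * fpoch B q n / (fpoch q q n * fpoch C q n) * Z ^ n) := by
          rw [qbc]
          have h1 := fpoch_ne_zero hq hq n
          have h2 := fpoch_ne_zero hq hC n
          have h3 := fpoch_ne_zero hq hB n
          have h4 := qPochInf_ne_zero hq hB
          field_simp
  -- step C : inner sums over n
  have stepC : ∀ m : ℕ, ∑' n : ℕ, g n m
      = (qPochInf (A * Z) q / qPochInf Z q)
        * (fpoch (C / B) q m * fpoch Z q m / (fpoch q q m * fpoch (A * Z) q m) * B ^ m) := by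
    intro m
    have harg : A * (Z * q ^ m) = (A * Z) * q ^ m := by ring
    have hAZ' : ‖A * (Z * q ^ m)‖ < 1 := by rw [harg]; exact norm_mul_q_lt hq hAZ m
    have hbin := qbinom hq A (hZqm m) hAZ'
    rw [harg] at hbin
    calc ∑' n : ℕ, g n m
        = ∑' n : ℕ, (qbc (C / B) q m * B ^ m) * (qbc A q n * (Z * q ^ m) ^ n) := by
          refine tsum_congr fun n => ?_
          rw [hg]
          ring
      _ = (qbc (C / B) q m * B ^ m) * ∑' n : ℕ, qbc A q n * (Z * q ^ m) ^ n := by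
          rw [tsum_mul_left]
      _ = (qbc (C / B) q m * B ^ m)
          * (qPochInf ((A * Z) * q ^ m) q / qPochInf (Z * q ^ m) q) := by rw [hbin]
      _ = (qbc (C / B) q m * B ^ m)
          * ((qPochInf (A * Z) q / fpoch (A * Z) q m) / (qPochInf Z q / fpoch Z q m)) := by
          rw [qPochInf_shift hq hAZ m, qPochInf_shift hq hZ m]
      _ = (qPochInf (A * Z) q / qPochInf Z q)
          * (fpoch (C / B) q m * fpoch Z q m / (fpoch q q m * fpoch (A * Z) q m) * B ^ m) := by
          rw [qbc]
          have h1 := fpoch_ne_zero hq hq m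
          have h2 := fpoch_ne_zero hq hAZ m
          have h3 := fpoch_ne_zero hq hZ m
          have h4 := qPochInf_ne_zero hq hZ
          field_simp
  -- summability on the product
  have hu : Summable (fun n : ℕ => ‖qbc A q n * Z ^ n‖) :=
    summable_norm_iff.mpr (summable_qb hq A hZ)
  have hv : Summable (fun m : ℕ => ‖qbc (C / B) q m * B ^ m‖) :=
    summable_norm_iff.mpr (summable_qb hq (C / B) hB)
  have huv : Summable (fun x : ℕ × ℕ => ‖qbc A q x.1 * Z ^ x.1‖ * ‖qbc (C / B) q x.2 * B ^ x.2‖) :=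
    hu.mul_of_nonneg hv (fun x => norm_nonneg _) (fun x => norm_nonneg _)
  have hgsum : Summable (Function.uncurry g) := by
    refine Summable.of_norm_bounded huv ?_
    rintro ⟨n, m⟩
    simp only [Function.uncurry, hg, norm_mul, norm_pow]
    have h0 : ‖B‖ * ‖q‖ ^ n ≤ ‖B‖ := by
      have h1 : ‖q‖ ^ n ≤ 1 := pow_le_one₀ (norm_nonneg q) hq.le
      nlinarith [norm_nonneg B]
    gcongr
  have hrow : ∀ n : ℕ, Summable (g n) := by
    intro n
    exact (summable_qb hq (C / B) (hBqn n)).mul_left _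
  have hcol : ∀ m : ℕ, Summable (fun n => g n m) := by
    intro m
    refine ((summable_qb hq A (hZqm m)).mul_left (qbc (C / B) q m * B ^ m)).congr fun n => ?_
    rw [hg]
    ring
  have hswap : ∑' m : ℕ, ∑' n : ℕ, g n m = ∑' n : ℕ, ∑' m : ℕ, g n m :=
    Summable.tsum_comm' hgsum hrow hcol
  -- assemble
  have htotal1 : ∑' n : ℕ, ∑' m : ℕ, g n m
      = (qPochInf C q / qPochInf B q)
        * ∑' n : ℕ, fpoch A q n * fpoch B q n / (fpoch q q n * fpoch C q n) * Z ^ n := by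
    rw [← tsum_mul_left]
    exact tsum_congr stepA
  have htotal2 : ∑' m : ℕ, ∑' n : ℕ, g n m
      = (qPochInf (A * Z) q / qPochInf Z q)
        * ∑' m : ℕ, fpoch (C / B) q m * fpoch Z q m / (fpoch q q m * fpoch (A * Z) q m) * B ^ m := by
    rw [← tsum_mul_left]
    exact tsum_congr stepC
  have key := hswap
  rw [htotal1, htotal2] at key
  have hBne := qPochInf_ne_zero hq hB
  have hCne := qPochInf_ne_zero hq hC
  set L := ∑' n : ℕ, fpoch A q n * fpoch B q n / (fpoch q q n * fpoch C q n) * Z ^ n with hL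
  set R := ∑' m : ℕ, fpoch (C / B) q m * fpoch Z q m / (fpoch q q m * fpoch (A * Z) q m) * B ^ m
    with hR
  calc L = (qPochInf B q / qPochInf C q) * (qPochInf C q / qPochInf B q * L) := by
        field_simp
    _ = (qPochInf B q / qPochInf C q) * (qPochInf (A * Z) q / qPochInf Z q * R) := by
        rw [← key]
    _ = (qPochInf B q * qPochInf (A * Z) q) / (qPochInf C q * qPochInf Z q) * R := by
        ring

lemma exp_theta_pow_eq (m n : ℕ) (θ : ℝ) :
    Complex.exp (θ * Complex.I) ^ m * Complex.exp (-(θ * Complex.I)) ^ n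
      = Complex.exp ((((m : ℂ) - n) * Complex.I) * θ) := by
  rw [← Complex.exp_nat_mul, ← Complex.exp_nat_mul, ← Complex.exp_add]
  congr 1
  ring

lemma orth (m n : ℕ) :
    (∫ θ in (0:ℝ)..(2*π),
      Complex.exp (θ * Complex.I) ^ m * Complex.exp (-(θ * Complex.I)) ^ n)
    = if m = n then (2*π : ℂ) else 0 := by
  have hrw : (fun θ : ℝ => Complex.exp (θ * Complex.I) ^ m * Complex.exp (-(θ * Complex.I)) ^ n)
      = fun θ : ℝ => Complex.exp ((((m : ℂ) - n) * Complex.I) * θ) := by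
    funext θ; exact exp_theta_pow_eq m n θ
  rw [hrw]
  by_cases h : m = n
  · subst h
    simp only [sub_self, zero_mul, Complex.exp_zero]
    rw [intervalIntegral.integral_const]
    simp
  · have hc : ((m : ℂ) - n) * Complex.I ≠ 0 := by
      apply mul_ne_zero _ Complex.I_ne_zero
      rw [sub_ne_zero]
      exact_mod_cast fun hmn => h (by exact_mod_cast hmn)
    rw [integral_exp_mul_complex hc]
    have h1 : Complex.exp (((m : ℂ) - n) * Complex.I * (2*π : ℝ))
        = 1 := by
      have : (((m : ℂ) - n) * Complex.I * (2*π : ℝ)) = ((m : ℤ) - (n : ℤ)) * (2 * π * Complex.I) := by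
        push_cast
        ring
      rw [this]
      exact_mod_cast Complex.exp_int_mul_two_pi_mul_I ((m : ℤ) - n)
    simp only [h1]
    simp [h]


lemma integral_eval {q d a : ℂ} (hq : ‖q‖ < 1) (hd : ‖d‖ < 1) (had : ‖a * d‖ < 1) :
    (∫ θ in (0:ℝ)..(2*π),
      (qPochInf (a * d * Complex.exp (θ * Complex.I)) q *
       qPochInf (a * d * Complex.exp (-(θ * Complex.I))) q) /
      (qPochInf (d * Complex.exp (θ * Complex.I)) q *
       qPochInf (d * Complex.exp (-(θ * Complex.I))) q))
    = (2*π : ℂ) * ∑' n : ℕ, (qbc a q n * d ^ n) * (qbc a q n * d ^ n) := by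
  set f : ℕ → ℂ := fun n => qbc a q n * d ^ n with hfdef
  have hf : Summable f := summable_qb hq a hd
  have hfn : Summable (fun n : ℕ => ‖f n‖) := summable_norm_iff.mpr hf
  -- the binomial expansion of each factor on the unit circle
  have ratio_eq : ∀ z : ℂ, ‖z‖ = 1 →
      qPochInf (a * d * z) q / qPochInf (d * z) q = ∑' n : ℕ, f n * z ^ n := by
    intro z hz
    have hdz : ‖d * z‖ < 1 := by rw [norm_mul, hz, mul_one]; exact hd
    have hadz : ‖a * (d * z)‖ < 1 := by
      rw [← mul_assoc, norm_mul, hz, mul_one]; exact had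
    have hb := qbinom hq a hdz hadz
    rw [← mul_assoc] at hb
    rw [← hb]
    refine tsum_congr fun n => ?_
    rw [hfdef]
    simp only
    rw [mul_pow]
    ring
  -- norm one facts
  have hz1 : ∀ θ : ℝ, ‖Complex.exp (θ * Complex.I)‖ = 1 := fun θ =>
    Complex.norm_exp_ofReal_mul_I θ
  have hz2 : ∀ θ : ℝ, ‖Complex.exp (-(θ * Complex.I))‖ = 1 := by
    intro θ
    have : -((θ : ℂ) * Complex.I) = ((-θ : ℝ) : ℂ) * Complex.I := by push_cast; ring
    rw [this]
    exact Complex.norm_exp_ofReal_mul_I (-θ)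
  -- summable on circle
  have hfz : ∀ z : ℂ, ‖z‖ = 1 → Summable (fun n : ℕ => ‖f n * z ^ n‖) := by
    intro z hz
    refine hfn.congr fun n => ?_
    simp [hfdef, norm_mul, norm_pow, hz]
  -- the double-index functions
  set G : ℕ × ℕ → ℝ → ℂ := fun x θ =>
    (f x.1 * f x.2) * (Complex.exp (θ * Complex.I) ^ x.1
      * Complex.exp (-(θ * Complex.I)) ^ x.2) with hGdef
  -- pointwise expansion of the integrand
  have pointwise : ∀ θ : ℝ,
      (qPochInf (a * d * Complex.exp (θ * Complex.I)) q *
       qPochInf (a * d * Complex.exp (-(θ * Complex.I))) q) /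
      (qPochInf (d * Complex.exp (θ * Complex.I)) q *
       qPochInf (d * Complex.exp (-(θ * Complex.I))) q)
      = ∑' x : ℕ × ℕ, G x θ := by
    intro θ
    rw [← div_mul_div_comm, ratio_eq _ (hz1 θ), ratio_eq _ (hz2 θ),
      tsum_mul_tsum_of_summable_norm (hfz _ (hz1 θ)) (hfz _ (hz2 θ))]
    refine tsum_congr fun x => ?_
    rw [hGdef]
    simp only
    ring
  -- continuity and integrability of each term
  have hGcont : ∀ x : ℕ × ℕ, Continuous (G x) := by
    intro x
    have hc1 : Continuous fun θ : ℝ => Complex.exp ((θ : ℂ) * Complex.I) :=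
      Complex.continuous_exp.comp (Complex.continuous_ofReal.mul continuous_const)
    have hc2 : Continuous fun θ : ℝ => Complex.exp (-((θ : ℂ) * Complex.I)) :=
      Complex.continuous_exp.comp (Complex.continuous_ofReal.mul continuous_const).neg
    exact continuous_const.mul ((hc1.pow _).mul (hc2.pow _))
  have h0le : (0:ℝ) ≤ 2*π := by positivity
  have hvol : (volume (Set.Ioc (0:ℝ) (2*π))).toReal = 2*π := by
    have h20 : (2*π - 0 : ℝ) = 2*π := by ring
    rw [Real.volume_Ioc, h20, ENNReal.toReal_ofReal (by positivity)]
  have hint : ∀ x : ℕ × ℕ, Integrable (G x) (volume.restrict (Set.Ioc (0:ℝ) (2*π))) :=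
    fun x => (hGcont x).integrableOn_Ioc
  have hnormG : ∀ (x : ℕ × ℕ) (θ : ℝ), ‖G x θ‖ = ‖f x.1‖ * ‖f x.2‖ := by
    intro x θ
    simp [hGdef, norm_mul, norm_pow, hz1 θ, hz2 θ]
  have hsum : Summable (fun x : ℕ × ℕ =>
      ∫ θ in Set.Ioc (0:ℝ) (2*π), ‖G x θ‖) := by
    have heq : ∀ x : ℕ × ℕ, (∫ θ in Set.Ioc (0:ℝ) (2*π), ‖G x θ‖)
        = (2*π) * (‖f x.1‖ * ‖f x.2‖) := by
      intro x
      simp_rw [hnormG x]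
      rw [integral_const, measureReal_restrict_apply_univ, Measure.real, hvol, smul_eq_mul]
    rw [funext heq]
    exact ((hfn.mul_of_nonneg hfn (fun n => norm_nonneg _) (fun n => norm_nonneg _)).mul_left
      (2*π))
  have hHS := hasSum_integral_of_summable_integral_norm hint hsum
  have hsummable : Summable (fun x : ℕ × ℕ =>
      ∫ θ in Set.Ioc (0:ℝ) (2*π), G x θ) := ⟨_, hHS⟩
  -- value of each term integral
  have hterm : ∀ x : ℕ × ℕ, (∫ θ in Set.Ioc (0:ℝ) (2*π), G x θ)
      = (f x.1 * f x.2) * (if x.1 = x.2 then (2*π : ℂ) else 0) := by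
    intro x
    rw [← intervalIntegral.integral_of_le h0le]
    rw [hGdef]
    simp only
    rw [intervalIntegral.integral_const_mul, orth x.1 x.2]
  calc (∫ θ in (0:ℝ)..(2*π),
      (qPochInf (a * d * Complex.exp (θ * Complex.I)) q *
       qPochInf (a * d * Complex.exp (-(θ * Complex.I))) q) /
      (qPochInf (d * Complex.exp (θ * Complex.I)) q *
       qPochInf (d * Complex.exp (-(θ * Complex.I))) q))
      = ∫ θ in (0:ℝ)..(2*π), ∑' x : ℕ × ℕ, G x θ := by
        refine intervalIntegral.integral_congr fun θ _ => pointwise θ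
    _ = ∫ θ in Set.Ioc (0:ℝ) (2*π), ∑' x : ℕ × ℕ, G x θ :=
        intervalIntegral.integral_of_le h0le
    _ = ∑' x : ℕ × ℕ, ∫ θ in Set.Ioc (0:ℝ) (2*π), G x θ := hHS.tsum_eq.symm
    _ = ∑' x : ℕ × ℕ, (f x.1 * f x.2) * (if x.1 = x.2 then (2*π : ℂ) else 0) :=
        tsum_congr hterm
    _ = ∑' n : ℕ, ∑' m : ℕ, (f n * f m) * (if n = m then (2*π : ℂ) else 0) := by
        refine Summable.tsum_prod' (hsummable.congr hterm) ?_
        intro n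
        apply summable_of_ne_finset_zero (s := ({n} : Finset ℕ))
        intro m hm
        simp only [Finset.mem_singleton] at hm
        rw [if_neg (fun h => hm h.symm), mul_zero]
    _ = ∑' n : ℕ, (f n * f n) * (2*π : ℂ) := by
        refine tsum_congr fun n => ?_
        refine tsum_eq_single n ?_ |>.trans (by simp)
        intro m hm
        simp [Ne.symm hm]
    _ = (2*π : ℂ) * ∑' n : ℕ, f n * f n := by
        rw [tsum_mul_right, mul_comm]

theorem residue_evaluation_Nf1 (p b : ℂ)
    (hp0 : 0 < ‖p‖) (hp1 : ‖p‖ < 1)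
    (hpb : ‖p‖ < ‖b‖) (hb : ‖b‖ < 1)
    (k : ℕ) :
    (1 / (2 * (π : ℂ))) *
      ∫ θ in (0 : ℝ)..(2 * π),
        (qPochInf (b * p ^ (1 + k) * Complex.exp (θ * Complex.I)) (p ^ 2) *
         qPochInf (b * p ^ (1 + k) * Complex.exp (-(θ * Complex.I))) (p ^ 2)) /
        (qPochInf (p ^ (1 + k) / b * Complex.exp (θ * Complex.I)) (p ^ 2) *
         qPochInf (p ^ (1 + k) / b * Complex.exp (-(θ * Complex.I))) (p ^ 2))
    = (qPochInf (p ^ (2 + 2 * k)) (p ^ 2) * qPochInf (b ^ 2) (p ^ 2)) /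
      (qPochInf (p ^ 2) (p ^ 2) * qPochInf (p ^ (2 + 2 * k) / b ^ 2) (p ^ 2)) *
      phi21 (p ^ (2 + 2 * k) / b ^ 2) (p ^ 2 / b ^ 2) (p ^ (2 + 2 * k)) (p ^ 2) (b ^ 2) := by
  set q : ℂ := p ^ 2 with hqdef
  set a : ℂ := b ^ 2 with hadef
  set t : ℂ := p ^ (2 + 2 * k) with htdef
  set d : ℂ := p ^ (1 + k) / b with hddef
  have hb' : (0:ℝ) < ‖b‖ := lt_trans hp0 hpb
  have hb0 : b ≠ 0 := by
    intro h
    rw [h] at hb'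
    simp at hb'
  have ha0 : a ≠ 0 := pow_ne_zero 2 hb0
  have hq1 : ‖q‖ < 1 := by
    rw [hqdef, norm_pow]
    exact pow_lt_one₀ (norm_nonneg p) hp1 two_ne_zero
  have ha1 : ‖a‖ < 1 := by
    rw [hadef, norm_pow]
    exact pow_lt_one₀ (norm_nonneg b) hb two_ne_zero
  have ht1 : ‖t‖ < 1 := by
    rw [htdef, norm_pow]
    exact pow_lt_one₀ (norm_nonneg p) hp1 (by omega)
  have hpk : ‖p‖ ^ (1 + k) ≤ ‖p‖ :=
    pow_le_of_le_one (norm_nonneg p) hp1.le (by omega)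
  have hpkb : ‖p‖ ^ (1 + k) < ‖b‖ := lt_of_le_of_lt hpk hpb
  have hd1 : ‖d‖ < 1 := by
    rw [hddef, norm_div, norm_pow, div_lt_one hb']
    exact hpkb
  have hexp : (1 + k) * 2 = 2 + 2 * k := by ring
  have hp2 : (p ^ (1 + k)) ^ 2 = t := by
    rw [htdef, ← pow_mul, hexp]
  have hnp2 : (‖p‖ ^ (1 + k)) ^ 2 = ‖p‖ ^ (2 + 2 * k) := by
    rw [← pow_mul, hexp]
  have hta : ‖t / a‖ < 1 := by
    rw [htdef, hadef, norm_div, norm_pow, norm_pow, div_lt_one (by positivity)]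
    rw [← hnp2]
    exact pow_lt_pow_left₀ hpkb (by positivity) two_ne_zero
  have hqa : ‖q / a‖ < 1 := by
    rw [hqdef, hadef, norm_div, norm_pow, norm_pow, div_lt_one (by positivity)]
    exact pow_lt_pow_left₀ hpb (norm_nonneg p) two_ne_zero
  have hat : a * (t / a) = t := by field_simp
  have hAZ : ‖a * (t / a)‖ < 1 := by rw [hat]; exact ht1
  have had : ‖a * d‖ < 1 := by
    have h1 : a * d = b * p ^ (1 + k) := by
      rw [hadef, hddef]
      field_simp
    rw [h1, norm_mul, norm_pow]
    calc ‖b‖ * ‖p‖ ^ (1 + k) ≤ ‖b‖ * 1 := by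
          refine mul_le_mul_of_nonneg_left ?_ (norm_nonneg b)
          exact le_trans hpk hp1.le
      _ < 1 := by simpa using hb
  have hba : b * p ^ (1 + k) = a * d := by
    rw [hadef, hddef]
    field_simp
  have hd2 : d ^ 2 = t / a := by
    rw [hddef, div_pow, hp2, hadef]
  -- evaluate the integral
  simp only [hba]
  rw [integral_eval hq1 hd1 had]
  have hpi : (2 * (π : ℂ)) ≠ 0 := by
    simp [Real.pi_ne_zero]
  rw [← mul_assoc, one_div, inv_mul_cancel₀ hpi, one_mul]
  -- rewrite the diagonal sum as a ₂φ₁-type sum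
  have hsum_eq : (∑' n : ℕ, (qbc a q n * d ^ n) * (qbc a q n * d ^ n))
      = ∑' n : ℕ, fpoch a q n * fpoch a q n / (fpoch q q n * fpoch q q n) * (t / a) ^ n := by
    refine tsum_congr fun n => ?_
    rw [← hd2, qbc]
    ring
  rw [hsum_eq]
  -- Heine's transformation
  rw [heine hq1 ha1 ha0 hq1 hta hAZ hqa]
  simp only [hat]
  -- identify the ₂φ₁ series
  have hphi : phi21 (t / a) (q / a) t q a
      = ∑' m : ℕ, fpoch (q / a) q m * fpoch (t / a) q m / (fpoch q q m * fpoch t q m) * a ^ m := by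
    rw [phi21]
    refine tsum_congr fun n => ?_
    rw [qPochInt_eq_fpoch hq1 hta n, qPochInt_eq_fpoch hq1 hqa n,
      qPochInt_eq_fpoch hq1 hq1 n, qPochInt_eq_fpoch hq1 ht1 n]
    ring
  rw [hphi]
  ring
end
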